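/- arXiv:2211.08626 — 2 statements merged into one kernel-verified Lean document; each statement's English description precedes it below -/
import Mathlib

section
/- (Theorem 1, computational form.) Let n, l1, l2 be an orthonormal family in ℝ³, let a_t, a_H, a_r be unit vectors in ℝ³, and let a_rθ, a_rφ be unit vectors such that {a_r, a_rθ, a_rφ} is orthonormal. Let λ, L1, L2, H0, η, d_r be positive reals and set k = 2π/λ. Define the complex numbers E_θ = −(i·k·η/(4π·d_r))·exp(−i·k·d_r) · ∫_{β=-L2/2}^{L2/2} ∫_{α=-L1/2}^{L1/2} ⟨2·H0·(n × a_H), a_rθ⟩ · exp(−i·k·⟨a_t, α·l1+β·l2⟩) · exp(i·k·⟨α·l1+β·l2, a_r⟩) dα dβ and E_φ defined identically with a_rθ replaced by a_rφ. Then 4π·d_r²·(|E_θ|² + |E_φ|²)/(η²·H0²) = (4π·L1²·L2²/λ²) · ‖(n × a_H) × a_r‖² · sinc²((k·L1/2)·⟨a_r − a_t, l1⟩) · sinc²((k·L2/2)·⟨a_r − a_t, l2⟩). -/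
open scoped RealInnerProductSpace

/-- The unnormalized sinc function: `sinc x = sin x / x` for `x ≠ 0`, and `sinc 0 = 1`. -/
noncomputable def sinc (x : ℝ) : ℝ := if x = 0 then 1 else Real.sin x / x

/-- Construct a vector of `EuclideanSpace ℝ (Fin 3)` from its three coordinates. -/
noncomputable def vec3 (x y z : ℝ) : EuclideanSpace ℝ (Fin 3) := WithLp.toLp 2 ![x, y, z]

/-- The cross product on `EuclideanSpace ℝ (Fin 3)`. -/
noncomputable def cross3 (v w : EuclideanSpace ℝ (Fin 3)) : EuclideanSpace ℝ (Fin 3) :=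
  vec3 (v 1 * w 2 - v 2 * w 1) (v 2 * w 0 - v 0 * w 2) (v 0 * w 1 - v 1 * w 0)

lemma sinc_integral (c L : ℝ) (hL : 0 < L) :
    ∫ x in (-(L/2))..(L/2), Complex.exp (Complex.I * ((c * x : ℝ) : ℂ)) =
      ((L * sinc (c * L / 2) : ℝ) : ℂ) := by
  rcases eq_or_ne c 0 with rfl | hc
  · simp [sinc]
  · have hI : (Complex.I * (c : ℂ)) ≠ 0 := by
      simp [Complex.I_ne_zero, Complex.ofReal_ne_zero, hc]
    have h1 : ∀ x : ℝ, Complex.I * ((c * x : ℝ) : ℂ) = (Complex.I * c) * x := by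
      intro x; push_cast; ring
    simp_rw [h1]
    rw [integral_exp_mul_complex hI]
    have ha : c * L / 2 ≠ 0 := by
      have := hL.ne'
      positivity
    rw [sinc, if_neg ha]
    have hnum : Complex.exp (Complex.I * c * (L/2)) - Complex.exp (Complex.I * c * (-(L/2))) =
        2 * Complex.I * Complex.sin ((c : ℂ) * L / 2) := by
      have e1 : Complex.I * (c:ℂ) * ((L:ℂ)/2) = ((c:ℂ) * L / 2) * Complex.I := by ring
      have e2 : Complex.I * (c:ℂ) * (-((L:ℂ)/2)) = (-((c:ℂ) * L / 2)) * Complex.I := by ring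
      rw [e1, e2, Complex.exp_mul_I, Complex.exp_mul_I, Complex.cos_neg, Complex.sin_neg]
      ring
    push_cast
    rw [hnum, div_eq_iff hI]
    have hcC : (c:ℂ) ≠ 0 := Complex.ofReal_ne_zero.mpr hc
    have hLC : (L:ℂ) ≠ 0 := Complex.ofReal_ne_zero.mpr hL.ne'
    field_simp

lemma lagrange3 (v w : EuclideanSpace ℝ (Fin 3)) :
    ‖cross3 v w‖ ^ 2 = ‖v‖ ^ 2 * ‖w‖ ^ 2 - ⟪v, w⟫ ^ 2 := by
  have hs : ∀ u : EuclideanSpace ℝ (Fin 3), ‖u‖ ^ 2 = ⟪u, u⟫ := fun u => by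
    rw [real_inner_self_eq_norm_sq]
  simp only [hs, PiLp.inner_apply, RCLike.inner_apply, conj_trivial, Fin.sum_univ_three,
    cross3, vec3]
  simp [Matrix.cons_val_zero, Matrix.cons_val_one]
  ring

lemma parseval3 (a b c w : EuclideanSpace ℝ (Fin 3)) (h : Orthonormal ℝ ![a, b, c]) :
    ⟪w, a⟫ ^ 2 + ⟪w, b⟫ ^ 2 + ⟪w, c⟫ ^ 2 = ‖w‖ ^ 2 := by
  have hcard : Fintype.card (Fin 3) = Module.finrank ℝ (EuclideanSpace ℝ (Fin 3)) := by
    simp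
  let B : OrthonormalBasis (Fin 3) ℝ (EuclideanSpace ℝ (Fin 3)) :=
    (basisOfOrthonormalOfCardEqFinrank h hcard).toOrthonormalBasis
      (by rwa [coe_basisOfOrthonormalOfCardEqFinrank])
  have hB : (B : Fin 3 → EuclideanSpace ℝ (Fin 3)) = ![a, b, c] := by
    rw [show (B : Fin 3 → _) = _ from Module.Basis.coe_toOrthonormalBasis _ _,
      coe_basisOfOrthonormalOfCardEqFinrank]
  have key := B.sum_inner_mul_inner w w
  rw [Fin.sum_univ_three, hB] at key
  have hn : ⟪w, w⟫ = ‖w‖ ^ 2 := real_inner_self_eq_norm_sq w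
  simp only [Matrix.cons_val_zero, Matrix.cons_val_one, Matrix.head_cons,
    Matrix.cons_val_two, Matrix.tail_cons] at key
  rw [← hn, ← key, real_inner_comm a w, real_inner_comm b w, real_inner_comm c w]
  ring

/-- Theorem 1 (computational form): the radar cross section
`σ = 4π d_r² (|E_θ|² + |E_φ|²)/(η² H0²)` of a rectangular metal plate computed by
physical optics equals
`(4π L1² L2²/λ²) ‖(n × a_H) × a_r‖² sinc²((kL1/2)⟨a_r−a_t,l1⟩) sinc²((kL2/2)⟨a_r−a_t,l2⟩)`. -/
theorem rcs_of_rectangular_plate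
    (n l1 l2 a_t a_H a_r a_rθ a_rφ : EuclideanSpace ℝ (Fin 3))
    (h_plate : Orthonormal ℝ ![n, l1, l2])
    (h_at : ‖a_t‖ = 1) (h_aH : ‖a_H‖ = 1)
    (h_obs : Orthonormal ℝ ![a_r, a_rθ, a_rφ])
    (lam L1 L2 H0 η d_r k : ℝ)
    (hlam : 0 < lam) (hL1 : 0 < L1) (hL2 : 0 < L2) (hH0 : 0 < H0)
    (hη : 0 < η) (hdr : 0 < d_r) (hk : k = 2 * Real.pi / lam)
    (E_θ E_φ : ℂ)
    (hEθ : E_θ = -(Complex.I * k * η / (4 * Real.pi * d_r)) *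
        Complex.exp (-(Complex.I * k * d_r)) *
        ∫ β in (-(L2 / 2))..(L2 / 2), ∫ α in (-(L1 / 2))..(L1 / 2),
          ((⟪(2 * H0) • cross3 n a_H, a_rθ⟫ : ℝ) : ℂ) *
            Complex.exp (-(Complex.I * ((k * ⟪a_t, α • l1 + β • l2⟫ : ℝ) : ℂ))) *
            Complex.exp (Complex.I * ((k * ⟪α • l1 + β • l2, a_r⟫ : ℝ) : ℂ)))
    (hEφ : E_φ = -(Complex.I * k * η / (4 * Real.pi * d_r)) *
        Complex.exp (-(Complex.I * k * d_r)) *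
        ∫ β in (-(L2 / 2))..(L2 / 2), ∫ α in (-(L1 / 2))..(L1 / 2),
          ((⟪(2 * H0) • cross3 n a_H, a_rφ⟫ : ℝ) : ℂ) *
            Complex.exp (-(Complex.I * ((k * ⟪a_t, α • l1 + β • l2⟫ : ℝ) : ℂ))) *
            Complex.exp (Complex.I * ((k * ⟪α • l1 + β • l2, a_r⟫ : ℝ) : ℂ))) :
    4 * Real.pi * d_r ^ 2 * (‖E_θ‖ ^ 2 + ‖E_φ‖ ^ 2) / (η ^ 2 * H0 ^ 2)
      = 4 * Real.pi * L1 ^ 2 * L2 ^ 2 / lam ^ 2 * ‖cross3 (cross3 n a_H) a_r‖ ^ 2 *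
        sinc (k * L1 / 2 * ⟪a_r - a_t, l1⟫) ^ 2 *
        sinc (k * L2 / 2 * ⟪a_r - a_t, l2⟫) ^ 2 := by
  have hpi : 0 < Real.pi := Real.pi_pos
  have hkpos : 0 < k := by rw [hk]; positivity
  set w : EuclideanSpace ℝ (Fin 3) := cross3 n a_H with hw
  set u1 : ℝ := ⟪a_r - a_t, l1⟫ with hu1
  set u2 : ℝ := ⟪a_r - a_t, l2⟫ with hu2
  set S1 : ℝ := sinc (k * u1 * L1 / 2) with hS1
  set S2 : ℝ := sinc (k * u2 * L2 / 2) with hS2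
  -- phase combination
  have hph : ∀ (α β : ℝ),
      Complex.exp (-(Complex.I * ((k * ⟪a_t, α • l1 + β • l2⟫ : ℝ) : ℂ))) *
        Complex.exp (Complex.I * ((k * ⟪α • l1 + β • l2, a_r⟫ : ℝ) : ℂ)) =
      Complex.exp (Complex.I * ((k * u1 * α : ℝ) : ℂ)) *
        Complex.exp (Complex.I * ((k * u2 * β : ℝ) : ℂ)) := by
    intro α β
    rw [← Complex.exp_add, ← Complex.exp_add]
    congr 1
    have e1 : ⟪a_t, α • l1 + β • l2⟫ = α * ⟪a_t, l1⟫ + β * ⟪a_t, l2⟫ := by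
      rw [inner_add_right, real_inner_smul_right, real_inner_smul_right]
    have e2 : ⟪α • l1 + β • l2, a_r⟫ = α * ⟪l1, a_r⟫ + β * ⟪l2, a_r⟫ := by
      rw [inner_add_left, real_inner_smul_left, real_inner_smul_left]
    have e3 : u1 = ⟪l1, a_r⟫ - ⟪a_t, l1⟫ := by
      rw [hu1, inner_sub_left, real_inner_comm a_r l1]
    have e4 : u2 = ⟪l2, a_r⟫ - ⟪a_t, l2⟫ := by
      rw [hu2, inner_sub_left, real_inner_comm a_r l2]
    rw [e1, e2]
    push_cast [e3, e4]
    ring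
  -- value of the double integral
  have hint : ∀ C : ℝ,
      (∫ β in (-(L2 / 2))..(L2 / 2), ∫ α in (-(L1 / 2))..(L1 / 2),
          ((C : ℝ) : ℂ) *
            Complex.exp (-(Complex.I * ((k * ⟪a_t, α • l1 + β • l2⟫ : ℝ) : ℂ))) *
            Complex.exp (Complex.I * ((k * ⟪α • l1 + β • l2, a_r⟫ : ℝ) : ℂ)))
        = ((C * (L1 * S1) * (L2 * S2) : ℝ) : ℂ) := by
    intro C
    have hinner : ∀ β : ℝ,
        (∫ α in (-(L1 / 2))..(L1 / 2),
          ((C : ℝ) : ℂ) *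
            Complex.exp (-(Complex.I * ((k * ⟪a_t, α • l1 + β • l2⟫ : ℝ) : ℂ))) *
            Complex.exp (Complex.I * ((k * ⟪α • l1 + β • l2, a_r⟫ : ℝ) : ℂ)))
        = ((C * (L1 * S1) : ℝ) : ℂ) * Complex.exp (Complex.I * ((k * u2 * β : ℝ) : ℂ)) := by
      intro β
      have : ∀ α : ℝ,
          ((C : ℝ) : ℂ) *
            Complex.exp (-(Complex.I * ((k * ⟪a_t, α • l1 + β • l2⟫ : ℝ) : ℂ))) *
            Complex.exp (Complex.I * ((k * ⟪α • l1 + β • l2, a_r⟫ : ℝ) : ℂ))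
          = ((C : ℝ) : ℂ) * Complex.exp (Complex.I * ((k * u2 * β : ℝ) : ℂ)) *
              Complex.exp (Complex.I * ((k * u1 * α : ℝ) : ℂ)) := by
        intro α
        rw [mul_assoc, hph α β]
        ring
      rw [intervalIntegral.integral_congr (g := fun α =>
        ((C : ℝ) : ℂ) * Complex.exp (Complex.I * ((k * u2 * β : ℝ) : ℂ)) *
          Complex.exp (Complex.I * ((k * u1 * α : ℝ) : ℂ))) (fun α _ => this α)]
      rw [intervalIntegral.integral_const_mul, sinc_integral (k * u1) L1 hL1]
      push_cast [hS1]
      ring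
    rw [intervalIntegral.integral_congr (g := fun β =>
      ((C * (L1 * S1) : ℝ) : ℂ) * Complex.exp (Complex.I * ((k * u2 * β : ℝ) : ℂ)))
      (fun β _ => hinner β)]
    rw [intervalIntegral.integral_const_mul, sinc_integral (k * u2) L2 hL2]
    push_cast [hS2]
    ring
  -- absolute value squared
  have habs : ∀ (X : ℝ) (E : ℂ), E = -(Complex.I * k * η / (4 * Real.pi * d_r)) *
        Complex.exp (-(Complex.I * k * d_r)) * ((X : ℝ) : ℂ) →
      ‖E‖ ^ 2 = (k * η / (4 * Real.pi * d_r)) ^ 2 * X ^ 2 := by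
    intro X E hE
    rw [hE, norm_mul, norm_mul, Complex.norm_exp]
    have hre : (-(Complex.I * (k:ℂ) * (d_r:ℂ))).re = 0 := by
      simp [Complex.mul_re]
    rw [hre, Real.exp_zero]
    have h1 : ‖(-(Complex.I * (k:ℂ) * (η:ℂ) / (4 * (Real.pi:ℂ) * (d_r:ℂ))))‖
        = |k| * |η| / (4 * Real.pi * |d_r|) := by
      rw [norm_neg, norm_div, norm_mul, norm_mul, norm_mul, norm_mul, Complex.norm_I]
      simp [Complex.norm_real, abs_of_pos hpi]
    rw [h1, Complex.norm_real, Real.norm_eq_abs, abs_of_pos hη, abs_of_pos hdr, abs_of_pos hkpos, mul_one,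
      mul_pow, sq_abs]
  -- inner products with smul
  have hC1 : (⟪(2 * H0) • w, a_rθ⟫ : ℝ) = 2 * H0 * ⟪w, a_rθ⟫ := real_inner_smul_left _ _ _
  have hC2 : (⟪(2 * H0) • w, a_rφ⟫ : ℝ) = 2 * H0 * ⟪w, a_rφ⟫ := real_inner_smul_left _ _ _
  rw [hint] at hEθ hEφ
  have hAθ := habs _ _ hEθ
  have hAφ := habs _ _ hEφ
  -- geometry
  have har : ‖a_r‖ = 1 := by
    have := h_obs.1 0
    simpa using this
  have hgeo : ⟪w, a_rθ⟫ ^ 2 + ⟪w, a_rφ⟫ ^ 2 = ‖cross3 w a_r‖ ^ 2 := by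
    have hp := parseval3 a_r a_rθ a_rφ w h_obs
    have hl := lagrange3 w a_r
    rw [har, one_pow, mul_one] at hl
    linarith
  -- sinc argument normalization
  have hs1 : k * L1 / 2 * ⟪a_r - a_t, l1⟫ = k * u1 * L1 / 2 := by rw [hu1]; ring
  have hs2 : k * L2 / 2 * ⟪a_r - a_t, l2⟫ = k * u2 * L2 / 2 := by rw [hu2]; ring
  rw [hC1] at hAθ
  rw [hC2] at hAφ
  rw [hs1, hs2, ← hS1, ← hS2, hAθ, hAφ, ← hgeo, hk]
  have hπ0 : Real.pi ≠ 0 := hpi.ne'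
  field_simp
  ring
end

section
/- (Lemma 2.) Let θ_t, φ_t, ψ, θ_r, φ_r, λ, L1, L2 be reals with λ, L1, L2 > 0, and set k = 2π/λ. Define in ℝ³: a_t = (−sin θ_t cos φ_t, −sin θ_t sin φ_t, −cos θ_t), a_r = (sin θ_r cos φ_r, sin θ_r sin φ_r, cos θ_r), a_H = (−sin ψ cos θ_t cos φ_t − cos ψ sin φ_t, −sin ψ cos θ_t sin φ_t + cos ψ cos φ_t, sin ψ sin θ_t), and let e_x = (1,0,0), e_y = (0,1,0), e_z = (0,0,1). Then (4π L1² L2²/λ²) · ‖(e_z × a_H) × a_r‖² · sinc²((kL1/2)·⟨a_r − a_t, e_x⟩) · sinc²((kL2/2)·⟨a_r − a_t, e_y⟩) = (4π L1² L2²/λ²) · [cos²θ_r·(sin ψ cos θ_t sin(φ_r − φ_t) + cos ψ cos(φ_t − φ_r))² + (cos ψ sin(φ_t − φ_r) + sin ψ cos θ_t cos(φ_t − φ_r))²] · sinc²((kL1/2)(sin θ_r cos φ_r + sin θ_t cos φ_t)) · sinc²((kL2/2)(sin θ_r sin φ_r + sin θ_t sin φ_t)). -/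
open scoped RealInnerProductSpace
open Real

/-- Lemma 2: the general RCS formula specialized to a plate in the x–y plane
(`n = e_z`, `l1 = e_x`, `l2 = e_y`) expressed via the incidence angles `θ_t, φ_t`,
the observation angles `θ_r, φ_r` and the polarization angle `ψ`. -/
theorem rcs_plate_xy_plane (θ_t φ_t ψ θ_r φ_r lam L1 L2 k : ℝ)
    (hlam : 0 < lam) (hL1 : 0 < L1) (hL2 : 0 < L2) (hk : k = 2 * π / lam)
    (a_t a_r a_H e_x e_y e_z : EuclideanSpace ℝ (Fin 3))
    (h_at : a_t = vec3 (-(sin θ_t * cos φ_t)) (-(sin θ_t * sin φ_t)) (-cos θ_t))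
    (h_ar : a_r = vec3 (sin θ_r * cos φ_r) (sin θ_r * sin φ_r) (cos θ_r))
    (h_aH : a_H = vec3 (-(sin ψ * cos θ_t * cos φ_t) - cos ψ * sin φ_t)
        (-(sin ψ * cos θ_t * sin φ_t) + cos ψ * cos φ_t) (sin ψ * sin θ_t))
    (h_ex : e_x = vec3 1 0 0) (h_ey : e_y = vec3 0 1 0) (h_ez : e_z = vec3 0 0 1) :
    4 * π * L1 ^ 2 * L2 ^ 2 / lam ^ 2 * ‖cross3 (cross3 e_z a_H) a_r‖ ^ 2 *
        _root_.sinc (k * L1 / 2 * ⟪a_r - a_t, e_x⟫) ^ 2 *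
        _root_.sinc (k * L2 / 2 * ⟪a_r - a_t, e_y⟫) ^ 2
      = 4 * π * L1 ^ 2 * L2 ^ 2 / lam ^ 2 *
        (cos θ_r ^ 2 *
            (sin ψ * cos θ_t * sin (φ_r - φ_t) + cos ψ * cos (φ_t - φ_r)) ^ 2 +
          (cos ψ * sin (φ_t - φ_r) + sin ψ * cos θ_t * cos (φ_t - φ_r)) ^ 2) *
        _root_.sinc (k * L1 / 2 * (sin θ_r * cos φ_r + sin θ_t * cos φ_t)) ^ 2 *
        _root_.sinc (k * L2 / 2 * (sin θ_r * sin φ_r + sin θ_t * sin φ_t)) ^ 2 := by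
  subst h_at h_ar h_aH h_ex h_ey h_ez
  have hix : ⟪(vec3 (sin θ_r * cos φ_r) (sin θ_r * sin φ_r) (cos θ_r) -
      vec3 (-(sin θ_t * cos φ_t)) (-(sin θ_t * sin φ_t)) (-cos θ_t)), vec3 1 0 0⟫
      = sin θ_r * cos φ_r + sin θ_t * cos φ_t := by
    simp [vec3, PiLp.inner_apply, Fin.sum_univ_three]
  have hiy : ⟪(vec3 (sin θ_r * cos φ_r) (sin θ_r * sin φ_r) (cos θ_r) -
      vec3 (-(sin θ_t * cos φ_t)) (-(sin θ_t * sin φ_t)) (-cos θ_t)), vec3 0 1 0⟫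
      = sin θ_r * sin φ_r + sin θ_t * sin φ_t := by
    simp [vec3, PiLp.inner_apply, Fin.sum_univ_three]
  rw [hix, hiy]
  have hnorm : ‖cross3 (cross3 (vec3 0 0 1)
      (vec3 (-(sin ψ * cos θ_t * cos φ_t) - cos ψ * sin φ_t)
        (-(sin ψ * cos θ_t * sin φ_t) + cos ψ * cos φ_t) (sin ψ * sin θ_t)))
      (vec3 (sin θ_r * cos φ_r) (sin θ_r * sin φ_r) (cos θ_r))‖ ^ 2
      = cos θ_r ^ 2 * (sin ψ * cos θ_t * sin (φ_r - φ_t) + cos ψ * cos (φ_t - φ_r)) ^ 2 +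
        (cos ψ * sin (φ_t - φ_r) + sin ψ * cos θ_t * cos (φ_t - φ_r)) ^ 2 := by
    rw [← real_inner_self_eq_norm_sq]
    simp only [cross3, vec3, PiLp.inner_apply, Fin.sum_univ_three,
      Matrix.cons_val_zero, Matrix.cons_val_one, Matrix.head_cons,
      Matrix.cons_val_two, Matrix.tail_cons, RCLike.inner_apply, conj_trivial]
    rw [Real.sin_sub, Real.cos_sub, Real.sin_sub]
    linear_combination (cos ψ * (sin φ_t * cos φ_r - cos φ_t * sin φ_r) +
        sin ψ * cos θ_t * (cos φ_t * cos φ_r + sin φ_t * sin φ_r)) ^ 2 *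
        (sin_sq_add_cos_sq θ_r) -
      cos θ_r ^ 2 * (sin ψ ^ 2 * cos θ_t ^ 2 + cos ψ ^ 2) *
        (sin φ_t ^ 2 + cos φ_t ^ 2) * (sin_sq_add_cos_sq φ_r)
  rw [hnorm]
end
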